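/- A commutative ring R is a PF-ring if and only if for every maximal ideal m of R, the localization R_m is an integral domain. -/

import Mathlib

/-- A commutative ring is a PF-ring if every principal ideal is flat. -/
def IsPFRing (R : Type*) [CommRing R] : Prop :=
  ∀ a : R, Module.Flat R (Ideal.span {a})

/-- Purity criterion: `Ideal.span {a}` is flat iff the annihilator of `a` is pure. -/
lemma flat_span_singleton_iff {R : Type u} [CommRing R] (a : R) :
    Module.Flat R (Ideal.span {a}) ↔
      ∀ x : R, x * a = 0 → ∃ y : R, y * a = 0 ∧ x * y = x := by
  have ha : a ∈ Ideal.span {a} := Ideal.mem_span_singleton_self a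
  constructor
  · intro hflat x hx
    have hrel : ∑ _i : PUnit.{u+1}, (fun _ => x) _i • (fun _ => (⟨a, ha⟩ : Ideal.span {a})) _i
        = 0 := by
      apply Subtype.ext
      simp [hx]
    obtain ⟨κ, A, y, h1, h2⟩ := Module.Flat.isTrivialRelation_of_sum_smul_eq_zero hrel
    have hy : ∀ j, ∃ r : R, (y j : R) = a * r := fun j => Ideal.mem_span_singleton'.1 (y j).2
          |>.imp (fun r hr => by rw [← hr]; ring)
    choose r hr using hy
    set c : R := ∑ j, A PUnit.unit j * r j with hc
    have hxc : ∀ j, x * A PUnit.unit j = 0 := by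
      intro j
      simpa using h2 j
    have hca : c * a = a := by
      have hval := congrArg Subtype.val (h1 PUnit.unit)
      simp only [Submodule.coe_sum, SetLike.val_smul, smul_eq_mul] at hval
      calc c * a = ∑ j, A PUnit.unit j * r j * a := by rw [hc, Finset.sum_mul]
        _ = ∑ j, A PUnit.unit j * (y j : R) :=
            Finset.sum_congr rfl fun j _ => by rw [hr j]; ring
        _ = a := hval.symm
    refine ⟨1 - c, by rw [sub_mul, one_mul, hca, sub_self], ?_⟩
    have hxc' : x * c = 0 := by
      rw [hc, Finset.mul_sum]
      refine Finset.sum_eq_zero fun j _ => ?_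
      rw [← mul_assoc, hxc j, zero_mul]
    rw [mul_sub, mul_one, hxc', sub_zero]
  · intro h
    apply Module.Flat.of_forall_isTrivialRelation
    intro ι f xs hsum
    have hxs : ∀ i, ∃ r : R, (xs i : R) = a * r := fun i => Ideal.mem_span_singleton'.1 (xs i).2
          |>.imp (fun r hr => by rw [← hr]; ring)
    choose r hr using hxs
    set c : R := ∑ i, f i * r i with hc
    have hca : c * a = 0 := by
      have hval := congrArg Subtype.val hsum
      simp only [Submodule.coe_sum, SetLike.val_smul, smul_eq_mul] at hval
      calc c * a = ∑ i, f i * r i * a := by rw [hc, Finset.sum_mul]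
        _ = ∑ i, f i * (xs i : R) := Finset.sum_congr rfl fun i _ => by rw [hr i]; ring
        _ = 0 := hval
    obtain ⟨y, hy1, hy2⟩ := h c hca
    refine ⟨1, fun i _ => r i * (1 - y), fun _ => ⟨a, ha⟩, ?_, ?_⟩
    · intro i
      apply Subtype.ext
      simp only [Submodule.coe_sum, SetLike.val_smul, smul_eq_mul]
      rw [Fintype.sum_unique, hr i]
      have hya : r i * y * a = 0 := by rw [mul_assoc, hy1, mul_zero]
      linear_combination hya
    · intro j
      have hstep : (∑ i, f i * (r i * (1 - y))) = c * (1 - y) := by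
        rw [hc, Finset.sum_mul]
        exact Finset.sum_congr rfl fun i _ => by ring
      rw [hstep, mul_sub, mul_one, hy2, sub_self]

theorem isPFRing_iff_localization_at_maximal_isDomain (R : Type*) [CommRing R] :
    IsPFRing R ↔ ∀ (m : Ideal R) (hm : m.IsMaximal),
      letI := hm.isPrime
      IsDomain (Localization.AtPrime m) := by
  constructor
  · intro hPF m hm
    letI := hm.isPrime
    haveI : NoZeroDivisors (Localization.AtPrime m) := by
      constructor
      intro X Y hXY
      obtain ⟨⟨x, s⟩, rfl⟩ := IsLocalization.mk'_surjective m.primeCompl X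
      obtain ⟨⟨y, t⟩, rfl⟩ := IsLocalization.mk'_surjective m.primeCompl Y
      rw [← IsLocalization.mk'_mul, IsLocalization.mk'_eq_zero_iff] at hXY
      obtain ⟨u, hu⟩ := hXY
      have hrel : ((u : R) * x) * y = 0 := by rw [mul_assoc]; exact hu
      obtain ⟨cc, hc1, hc2⟩ := (flat_span_singleton_iff y).1 (hPF y) _ hrel
      by_cases hcm : cc ∈ m
      · left
        rw [IsLocalization.mk'_eq_zero_iff]
        have h1c : (1 : R) - cc ∈ m.primeCompl := by
          intro hmem
          exact hm.ne_top ((Ideal.eq_top_iff_one m).2 (by simpa using m.add_mem hmem hcm))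
        refine ⟨u * ⟨(1 : R) - cc, h1c⟩, ?_⟩
        show ((u : R) * ((1 : R) - cc)) * x = 0
        have hz : (u : R) * x * (1 - cc) = 0 := by rw [mul_sub, mul_one, hc2, sub_self]
        linear_combination hz
      · right
        rw [IsLocalization.mk'_eq_zero_iff]
        exact ⟨⟨cc, hcm⟩, hc1⟩
    exact NoZeroDivisors.to_isDomain _
  · intro h a
    rw [flat_span_singleton_iff]
    intro x hx
    set J : Ideal R := Ideal.torsionOf R R a ⊔ Ideal.torsionOf R R x with hJ
    have hJtop : J = ⊤ := by
      by_contra hne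
      obtain ⟨m, hm, hJm⟩ := Ideal.exists_le_maximal J hne
      letI := hm.isPrime
      haveI := h m hm
      have h0 : algebraMap R (Localization.AtPrime m) x *
          algebraMap R (Localization.AtPrime m) a = 0 := by
        rw [← map_mul, hx, map_zero]
      rcases mul_eq_zero.1 h0 with h1 | h1
      · rw [IsLocalization.map_eq_zero_iff m.primeCompl] at h1
        obtain ⟨s, hs⟩ := h1
        exact s.2 (hJm (Ideal.mem_sup_right ((Ideal.mem_torsionOf_iff x (s : R)).2
          (by simpa using hs))))
      · rw [IsLocalization.map_eq_zero_iff m.primeCompl] at h1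
        obtain ⟨s, hs⟩ := h1
        exact s.2 (hJm (Ideal.mem_sup_left ((Ideal.mem_torsionOf_iff a (s : R)).2
          (by simpa using hs))))
    have h1 : (1 : R) ∈ J := hJtop ▸ Submodule.mem_top
    obtain ⟨y, hy, z, hz, hyz⟩ := Submodule.mem_sup.1 h1
    rw [Ideal.mem_torsionOf_iff, smul_eq_mul] at hy hz
    refine ⟨y, hy, ?_⟩
    have hxz : x * z = 0 := by linear_combination hz
    calc x * y = x * (y + z) - x * z := by ring
      _ = x := by rw [hyz, hxz, mul_one, sub_zero]
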